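/- Let Φ(ρ) = ∑_α K_α ρ K_α* be a completely positive map on M_d(ℂ) admitting a Kraus decomposition with rank(K_α) ≤ r for all α. Then for every positive semidefinite ρ ∈ M_d ⊗ M_d with Schmidt number at most s, the state (id ⊗ Φ)(ρ) has Schmidt number at most min(r, s). In particular Φ is r-partially entanglement breaking: (id ⊗ Φ)(ρ) has Schmidt number at most r for every state ρ. -/

import Mathlib

open Matrix Kronecker BigOperators
open scoped ComplexOrder

/-- ψ ∈ ℂ^d ⊗ ℂ^d (modeled on `Fin d × Fin d`) has Schmidt rank at most k:
it is a sum of k simple tensors. -/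
def schmidtRankLE (d k : ℕ) (ψ : Fin d × Fin d → ℂ) : Prop :=
  ∃ u v : Fin k → Fin d → ℂ, ψ = fun p => ∑ t, u t p.1 * v t p.2

/-- A positive semidefinite ρ on ℂ^d ⊗ ℂ^d has Schmidt number at most k:
it is a nonnegative combination of projectors onto vectors of Schmidt rank ≤ k. -/
def hasSchmidtNumberLE (d k : ℕ) (ρ : Matrix (Fin d × Fin d) (Fin d × Fin d) ℂ) : Prop :=
  ∃ (n : ℕ) (c : Fin n → ℝ) (ψ : Fin n → (Fin d × Fin d → ℂ)),
    (∀ m, 0 ≤ c m) ∧ (∀ m, schmidtRankLE d k (ψ m)) ∧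
    ρ = ∑ m, (c m : ℂ) • Matrix.vecMulVec (ψ m) (star (ψ m))

-- sum padding
lemma sum_pad {n r : ℕ} (h : n ≤ r) (f : Fin n → ℂ) :
    ∑ t : Fin r, (if ht : (t : ℕ) < n then f ⟨t, ht⟩ else 0) = ∑ t, f t := by
  rw [Fin.sum_univ_eq_sum_range (fun t => if ht : t < n then f ⟨t, ht⟩ else 0) r]
  have h2 : ∑ t, f t = ∑ t ∈ Finset.range n, (if ht : t < n then f ⟨t, ht⟩ else 0) := by
    rw [← Fin.sum_univ_eq_sum_range]
    exact Finset.sum_congr rfl fun t _ => by simp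
  rw [h2]
  exact (Finset.sum_subset (Finset.range_subset_range.2 h) (by
    intro x _ hx
    simp only [Finset.mem_range] at hx
    simp [hx])).symm

-- rank factorization
lemma exists_factor {d r : ℕ} (K : Matrix (Fin d) (Fin d) ℂ) (hK : K.rank ≤ r) :
    ∃ a b : Fin r → Fin d → ℂ, ∀ i j, K i j = ∑ t, a t i * b t j := by
  set V := LinearMap.range K.mulVecLin with hV
  have hcol : ∀ j, (fun i => K i j) ∈ V := by
    intro j
    exact ⟨Pi.single j 1, by ext i; simp [Matrix.mulVec, dotProduct, Pi.single_apply]⟩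
  set nn := Module.finrank ℂ V with hnn
  have hnr : nn ≤ r := hK
  let bas : Module.Basis (Fin nn) ℂ V := Module.finBasis ℂ V
  refine ⟨fun t i => if ht : (t : ℕ) < nn then ((bas ⟨t, ht⟩ : V) : Fin d → ℂ) i else 0,
          fun t j => if ht : (t : ℕ) < nn then bas.repr ⟨fun i => K i j, hcol j⟩ ⟨t, ht⟩ else 0,
          ?_⟩
  intro i j
  have hrep := bas.sum_repr ⟨fun i => K i j, hcol j⟩
  have := congrArg (fun x : V => (x : Fin d → ℂ) i) hrep
  simp only [Submodule.coe_sum, Submodule.coe_smul, Finset.sum_apply, Pi.smul_apply,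
    smul_eq_mul] at this
  rw [show (∑ t : Fin r, _ : ℂ) = ∑ t : Fin nn,
      ((bas t : V) : Fin d → ℂ) i * bas.repr ⟨fun i => K i j, hcol j⟩ t from ?_]
  · rw [← this]
    exact Finset.sum_congr rfl fun t _ => mul_comm _ _
  · rw [← sum_pad hnr (fun t => ((bas t : V) : Fin d → ℂ) i *
      bas.repr ⟨fun i => K i j, hcol j⟩ t)]
    refine Finset.sum_congr rfl fun t _ => ?_
    by_cases ht : (t : ℕ) < nn <;> simp [ht]

-- action of 1 ⊗ K on vectors, entrywise
lemma kron_mulVec {d : ℕ} (K : Matrix (Fin d) (Fin d) ℂ) (ψ : Fin d × Fin d → ℂ)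
    (p : Fin d × Fin d) :
    (((1 : Matrix (Fin d) (Fin d) ℂ) ⊗ₖ K) *ᵥ ψ) p = ∑ l, K p.2 l * ψ (p.1, l) := by
  rw [Matrix.mulVec]
  rw [show (((1 : Matrix (Fin d) (Fin d) ℂ) ⊗ₖ K) p ⬝ᵥ ψ) =
    ∑ q : Fin d × Fin d, ((1 : Matrix (Fin d) (Fin d) ℂ) ⊗ₖ K) p q * ψ q from rfl]
  rw [Fintype.sum_prod_type]
  simp [Matrix.one_apply, ite_mul, Finset.sum_ite_eq' (Finset.univ : Finset (Fin d))]

-- rank ≤ s preserved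
lemma rankA {d s : ℕ} (K : Matrix (Fin d) (Fin d) ℂ) (ψ : Fin d × Fin d → ℂ)
    (h : schmidtRankLE d s ψ) :
    schmidtRankLE d s (((1 : Matrix (Fin d) (Fin d) ℂ) ⊗ₖ K) *ᵥ ψ) := by
  obtain ⟨u, v, huv⟩ := h
  refine ⟨u, fun t => K *ᵥ v t, ?_⟩
  ext p
  rw [kron_mulVec]
  subst huv
  have hm : ∀ t, (K *ᵥ v t) p.2 = ∑ l, K p.2 l * v t l := fun t => rfl
  simp only [hm, Finset.mul_sum, Finset.sum_mul]
  rw [Finset.sum_comm]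
  exact Finset.sum_congr rfl fun t _ => Finset.sum_congr rfl fun l _ => by ring

lemma sum_rot {d s r : ℕ} (A : Fin d → Fin s → Fin r → ℂ) :
    ∑ x, ∑ y, ∑ z, A x y z = ∑ z, ∑ y, ∑ x, A x y z :=
  calc ∑ x, ∑ y, ∑ z, A x y z
      = ∑ x, ∑ z, ∑ y, A x y z := Finset.sum_congr rfl fun _ _ => Finset.sum_comm
    _ = ∑ z, ∑ x, ∑ y, A x y z := Finset.sum_comm
    _ = ∑ z, ∑ y, ∑ x, A x y z := Finset.sum_congr rfl fun _ _ => Finset.sum_comm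

-- rank ≤ r from Kraus factor
lemma rankB {d r s : ℕ} (K : Matrix (Fin d) (Fin d) ℂ) (a b : Fin r → Fin d → ℂ)
    (hab : ∀ i j, K i j = ∑ t, a t i * b t j)
    (ψ : Fin d × Fin d → ℂ) (h : schmidtRankLE d s ψ) :
    schmidtRankLE d r (((1 : Matrix (Fin d) (Fin d) ℂ) ⊗ₖ K) *ᵥ ψ) := by
  obtain ⟨u, v, huv⟩ := h
  refine ⟨fun t i => ∑ t' : Fin s, u t' i * (∑ l, b t l * v t' l), fun t => a t, ?_⟩
  ext p
  rw [kron_mulVec]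
  subst huv
  simp only [hab, Finset.sum_mul, Finset.mul_sum]
  rw [sum_rot]
  exact Finset.sum_congr rfl fun z _ => Finset.sum_congr rfl fun y _ =>
    Finset.sum_congr rfl fun x _ => by ring

lemma sandwich {m : Type*} [Fintype m] [DecidableEq m] (M : Matrix m m ℂ) (x : m → ℂ) :
    M * Matrix.vecMulVec x (star x) * Mᴴ =
      Matrix.vecMulVec (M *ᵥ x) (star (M *ᵥ x)) := by
  ext p q
  simp only [Matrix.mul_apply, Matrix.vecMulVec_apply, Matrix.conjTranspose_apply,
    Matrix.mulVec, dotProduct, Pi.star_apply, star_sum, star_mul', Finset.sum_mul,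
    Finset.mul_sum]
  refine Finset.sum_congr rfl fun j _ => Finset.sum_congr rfl fun i _ => by ring

/-- if Φ(ρ) = ∑_α K_α ρ K_α* with rank K_α ≤ r for all α, then for
every positive semidefinite ρ on ℂ^d ⊗ ℂ^d of Schmidt number ≤ s, the output
(id ⊗ Φ)(ρ) = ∑_α (1 ⊗ K_α) ρ (1 ⊗ K_α)* has Schmidt number at most min r s. -/
theorem pebt_of_kraus_rank_le (d r s : ℕ) {ι : Type} [Fintype ι]
    (K : ι → Matrix (Fin d) (Fin d) ℂ) (hK : ∀ α, (K α).rank ≤ r)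
    (ρ : Matrix (Fin d × Fin d) (Fin d × Fin d) ℂ) (hρ : ρ.PosSemidef)
    (hs : hasSchmidtNumberLE d s ρ) :
    hasSchmidtNumberLE d (min r s)
      (∑ α, ((1 : Matrix (Fin d) (Fin d) ℂ) ⊗ₖ K α) * ρ *
        (((1 : Matrix (Fin d) (Fin d) ℂ) ⊗ₖ K α))ᴴ) := by
  obtain ⟨n, c, ψ, hc, hrank, hρeq⟩ := hs
  choose a b hab using fun α => exists_factor (K α) (hK α)
  let e : Fin (n * Fintype.card ι) ≃ Fin n × ι :=
    finProdFinEquiv.symm.trans (Equiv.prodCongr (Equiv.refl _) (Fintype.equivFin ι).symm)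
  refine ⟨n * Fintype.card ι, fun m => c (e m).1,
    fun m => ((1 : Matrix (Fin d) (Fin d) ℂ) ⊗ₖ K (e m).2) *ᵥ ψ (e m).1,
    fun m => hc _, fun m => ?_, ?_⟩
  · rcases le_total r s with h | h
    · rw [min_eq_left h]
      exact rankB _ (a _) (b _) (hab _) _ (hrank _)
    · rw [min_eq_right h]
      exact rankA _ _ (hrank _)
  · beta_reduce
    refine Eq.trans ?_ (Equiv.sum_comp e (fun p : Fin n × ι => (c p.1 : ℂ) •
      Matrix.vecMulVec (((1 : Matrix (Fin d) (Fin d) ℂ) ⊗ₖ K p.2) *ᵥ ψ p.1)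
        (star (((1 : Matrix (Fin d) (Fin d) ℂ) ⊗ₖ K p.2) *ᵥ ψ p.1)))).symm
    rw [hρeq]
    rw [Fintype.sum_prod_type]
    rw [Finset.sum_comm]
    refine Finset.sum_congr rfl fun α _ => ?_
    rw [Matrix.mul_sum, Matrix.sum_mul]
    refine Finset.sum_congr rfl fun m _ => ?_
    rw [Matrix.mul_smul, Matrix.smul_mul, sandwich]
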